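/- The diamond norm of a cq-map equals the maximum trace norm of its defining operators: for A = {A_1, …, A_n} ⊂ B_h(K) and φ_A^{cq}: X ↦ Σ_i ⟨e_i, X e_i⟩ A_i from B(ℂⁿ) to B(K), one has ‖φ_A^{cq}‖_⋄ = max_i ‖A_i‖_1. -/

import Mathlib

open scoped Matrix Kronecker ComplexOrder Matrix.Norms.L2Operator

noncomputable section

/-- Square complex matrices indexed by `ι`. -/
abbrev Mat (ι : Type) [Fintype ι] [DecidableEq ι] : Type := Matrix ι ι ℂ

/-- Linear maps between matrix algebras. -/
abbrev MatMap (ι κ : Type) [Fintype ι] [DecidableEq ι] [Fintype κ] [DecidableEq κ] : Type :=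
  Mat ι →ₗ[ℂ] Mat κ

variable {ι κ μ ν : Type} [Fintype ι] [DecidableEq ι] [Fintype κ] [DecidableEq κ]
  [Fintype μ] [DecidableEq μ] [Fintype ν] [DecidableEq ν]

/-- `φ ⊗ id_τ`, the amplification of `φ` with the identity on `Mat τ`. -/
def tensorId (φ : MatMap ι κ) (τ : Type) [Fintype τ] [DecidableEq τ] :
    Matrix (ι × τ) (ι × τ) ℂ →ₗ[ℂ] Matrix (κ × τ) (κ × τ) ℂ where
  toFun X := Matrix.of fun p q => φ (Matrix.of fun i j => X (i, p.2) (j, q.2)) p.1 q.1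
  map_add' X Y := by
    funext p q
    show φ (Matrix.of fun i j => (X + Y) (i, p.2) (j, q.2)) p.1 q.1 = _
    rw [show (Matrix.of fun i j => (X + Y) (i, p.2) (j, q.2))
        = (Matrix.of fun i j => X (i, p.2) (j, q.2))
          + (Matrix.of fun i j => Y (i, p.2) (j, q.2)) from rfl, map_add]
    rfl
  map_smul' c X := by
    funext p q
    show φ (Matrix.of fun i j => (c • X) (i, p.2) (j, q.2)) p.1 q.1 = _
    rw [show (Matrix.of fun i j => (c • X) (i, p.2) (j, q.2))
        = c • (Matrix.of fun i j => X (i, p.2) (j, q.2)) from rfl, map_smul]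
    rfl

/-- `φ` is Hermitian-preserving. -/
def IsHermitianPreserving (φ : MatMap ι κ) : Prop := ∀ X, (φ X)ᴴ = φ Xᴴ

/-- `φ` is completely positive: all amplifications by finite-dimensional identities
preserve positive semidefiniteness. -/
def IsCP (φ : MatMap ι κ) : Prop :=
  ∀ (l : ℕ) (X : Matrix (ι × Fin l) (ι × Fin l) ℂ), X.PosSemidef →
    (tensorId φ (Fin l) X).PosSemidef

/-- `φ` is trace-preserving. -/
def IsTP (φ : MatMap ι κ) : Prop := ∀ X, (φ X).trace = X.trace

/-- A channel is a completely positive trace-preserving map. -/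
def IsChannel (φ : MatMap ι κ) : Prop := IsCP φ ∧ IsTP φ

/-- Density operator. -/
def IsState (σ : Mat ι) : Prop := σ.PosSemidef ∧ σ.trace = 1

/-- The Choi matrix of `φ`. -/
def choiMatrix (φ : MatMap ι κ) : Matrix (κ × ι) (κ × ι) ℂ :=
  Matrix.of fun p q => φ (Matrix.single p.2 q.2 1) p.1 q.1

/-- The tracelike functional `s`. -/
def sFun (φ : MatMap ι ι) : ℂ :=
  ∑ i, ∑ j, φ (Matrix.single i j 1) i j

/-- The pairing `⟨ψ, φ⟩ = s(ψ ∘ φ)`. -/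
def pairing (ψ : MatMap κ ι) (φ : MatMap ι κ) : ℂ := sFun (ψ ∘ₗ φ)

/-- The erasure map `A ↦ Tr[A] σ`. -/
def erasure (σ : Mat κ) : MatMap ι κ :=
  (Matrix.traceLinearMap ι ℂ ℂ).smulRight σ

/-- The diamond norm, via its order-theoretic characterization. -/
noncomputable def diamondNorm (φ : MatMap ι κ) : ℝ :=
  sInf {r : ℝ | 0 < r ∧ ∃ α : MatMap ι κ, IsChannel α ∧
    IsCP ((r : ℂ) • α - φ) ∧ IsCP ((r : ℂ) • α + φ)}

/-- The dual diamond norm, via its order-theoretic characterization. -/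
noncomputable def dualDiamondNorm (ψ : MatMap ι κ) : ℝ :=
  sInf {r : ℝ | 0 < r ∧ ∃ σ : Mat κ, IsState σ ∧
    IsCP ((r : ℂ) • erasure (ι := ι) σ - ψ) ∧ IsCP ((r : ℂ) • erasure (ι := ι) σ + ψ)}

/-- The Hilbert–Schmidt (trace-duality) adjoint of `ψ`. -/
def adjointMap (ψ : MatMap ι κ) : MatMap κ ι where
  toFun A := Matrix.of fun i j => (A * ψ (Matrix.single j i 1)).trace
  map_add' A B := by funext i j; simp [Matrix.add_mul]
  map_smul' c A := by funext i j; simp [Matrix.smul_mul]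

/-- The cq-map associated with a family of operators. -/
def cqMap {n : ℕ} (A : Fin n → Mat ι) : MatMap (Fin n) ι where
  toFun X := ∑ i, X i i • A i
  map_add' X Y := by simp [Matrix.add_apply, add_smul, Finset.sum_add_distrib]
  map_smul' c X := by simp [Matrix.smul_apply, smul_smul, Finset.smul_sum]

/-- The qc-map associated with a family of operators. -/
def qcMap {n : ℕ} (B : Fin n → Mat ι) : MatMap ι (Fin n) where
  toFun X := Matrix.diagonal fun i => (X * B i).trace
  map_add' X Y := by
    funext i j
    by_cases h : i = j <;>
      simp [Matrix.add_mul, Matrix.diagonal, Matrix.of_apply, h]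
  map_smul' c X := by
    funext i j
    by_cases h : i = j <;>
      simp [Matrix.smul_mul, Matrix.diagonal, Matrix.of_apply, h]

/-- A POVM with `n` outcomes. -/
def IsPOVM {n : ℕ} (M : Fin n → Mat ι) : Prop :=
  (∀ i, (M i).PosSemidef) ∧ ∑ i, M i = 1

/-- An ensemble: probabilities with states. -/
def IsEnsemble {n : ℕ} (lam : Fin n → ℝ) (σ : Fin n → Mat ι) : Prop :=
  (∀ i, 0 < lam i) ∧ (∑ i, lam i = 1) ∧ ∀ i, IsState (σ i)

/-- Optimal success probability of guessing among the states of an ensemble. -/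
noncomputable def pSucc {n : ℕ} (lam : Fin n → ℝ) (σ : Fin n → Mat ι) : ℝ :=
  sSup {r : ℝ | ∃ M : Fin n → Mat ι, IsPOVM M ∧
    r = ∑ i, lam i * ((M i * σ i).trace).re}

/-- The square root of a positive semidefinite matrix, as defined in the older Mathlib. -/
def Matrix.PosSemidef.sqrt {n 𝕜 : Type*} [Fintype n] [DecidableEq n] [RCLike 𝕜]
    {A : Matrix n n 𝕜} (hA : A.PosSemidef) : Matrix n n 𝕜 :=
  hA.1.eigenvectorUnitary.1 * Matrix.diagonal ((↑) ∘ (√·) ∘ hA.1.eigenvalues) *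
    (star hA.1.eigenvectorUnitary : Matrix n n 𝕜)

/-- Trace norm `‖A‖₁ = Tr √(AᴴA)`. -/
noncomputable def traceNorm (A : Mat ι) : ℝ :=
  ((Matrix.posSemidef_conjTranspose_mul_self A).sqrt).trace.re

/-- Le Cam deficiency of `Φ` with respect to `Ψ`. -/
noncomputable def deficiency (Φ : MatMap ι κ) (Ψ : MatMap ι μ) : ℝ :=
  sInf {r : ℝ | ∃ α : MatMap μ κ, IsChannel α ∧ r = diamondNorm (Φ - α ∘ₗ Ψ)}


open Matrix
namespace DNaux
set_option linter.unusedSectionVars false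
variable {ι κ : Type} [Fintype ι] [DecidableEq ι] [Fintype κ] [DecidableEq κ]

lemma smul_psd {M : Mat ι} (hM : M.PosSemidef) {c : ℝ} (hc : 0 ≤ c) :
    ((c:ℂ) • M).PosSemidef := by
  constructor
  · rw [IsHermitian, conjTranspose_smul]
    simp [hM.1.eq, Complex.conj_ofReal]
  · intro x
    exact (hM.smul (by exact_mod_cast hc : (0:ℂ) ≤ (c:ℂ))).2 x

lemma psd_diag_nonneg {M : Mat ι} (hM : M.PosSemidef) (j : ι) : 0 ≤ M j j := by
  have := hM.dotProduct_mulVec_nonneg (Pi.single j 1)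
  simpa [dotProduct, mulVec, Pi.single_apply, Finset.sum_ite_eq, mul_comm] using this

lemma psd_trace_re_nonneg {M : Mat ι} (hM : M.PosSemidef) : 0 ≤ M.trace.re := by
  rw [Matrix.trace, Complex.re_sum]
  exact Finset.sum_nonneg fun j _ => (Complex.le_def.mp (psd_diag_nonneg hM j)).1

open scoped MatrixOrder in
lemma psd_sqrt_eq_cfc {B : Mat ι} (hB : B.PosSemidef) : hB.sqrt = CFC.sqrt B := by
  rw [CFC.sqrt_eq_real_sqrt B (Matrix.nonneg_iff_posSemidef.mpr hB), cfcₙ_eq_cfc, hB.1.cfc_eq]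
  rfl

open scoped MatrixOrder in
lemma psd_sqrt_psd {B : Mat ι} (hB : B.PosSemidef) : hB.sqrt.PosSemidef := by
  rw [psd_sqrt_eq_cfc]
  exact Matrix.nonneg_iff_posSemidef.mp (CFC.sqrt_nonneg B)

open scoped MatrixOrder in
lemma sqrt_unique_psd {B P : Mat ι} (hB : B.PosSemidef) (hP : P.PosSemidef) (h : P * P = B) :
    hB.sqrt = P := by
  rw [psd_sqrt_eq_cfc]
  exact CFC.sqrt_unique h (Matrix.nonneg_iff_posSemidef.mpr hP)

lemma traceNorm_nonneg (A : Mat ι) : 0 ≤ traceNorm A :=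
  psd_trace_re_nonneg (psd_sqrt_psd (Matrix.posSemidef_conjTranspose_mul_self A))

lemma conj_diag_mul (U : Mat ι) (hU : star U * U = 1) (d e : ι → ℂ) :
    (U * diagonal d * star U) * (U * diagonal e * star U)
      = U * diagonal (d * e) * star U := by
  have h : (U * diagonal d * star U) * (U * diagonal e * star U)
      = U * diagonal d * (star U * U * (diagonal e * star U)) := by
    simp only [Matrix.mul_assoc]
  rw [h, hU, one_mul, ← Matrix.mul_assoc, Matrix.mul_assoc U, diagonal_mul_diagonal]
  rfl

lemma trace_conj (U : Mat ι) (hU : star U * U = 1) (D : Mat ι) :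
    (U * D * star U).trace = D.trace := by
  rw [Matrix.trace_mul_cycle, hU, one_mul]

lemma psd_conj_diag (U : Mat ι) (s : ι → ℝ) (hs : ∀ i, 0 ≤ s i) :
    (U * diagonal (fun i => ((s i : ℝ) : ℂ)) * star U).PosSemidef :=
  (Matrix.PosSemidef.diagonal (d := fun i => ((s i : ℝ) : ℂ))
      (fun i => by simpa using Complex.zero_le_real.2 (hs i))).mul_mul_conjTranspose_same U

lemma abs_parts_gen {A : Mat ι} (U : Mat ι) (d : ι → ℝ) (hU : star U * U = 1)
    (hspec : A = U * diagonal (fun i => ((d i : ℝ) : ℂ)) * star U) (hherm : Aᴴ = A) :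
    (∃ P : Mat ι, P.PosSemidef ∧ (P - A).PosSemidef ∧ (P + A).PosSemidef ∧
    P.trace = (traceNorm A : ℂ)) ∧ traceNorm A = ∑ i, |d i| := by
  set P : Mat ι := U * diagonal (fun i => ((|d i| : ℝ) : ℂ)) * star U with hP
  have hPpsd : P.PosSemidef := psd_conj_diag U _ (fun i => abs_nonneg (d i))
  have hsub : P - A = U * diagonal (fun i => ((|d i| - d i : ℝ) : ℂ)) * star U := by
    rw [hP]
    conv_lhs => rw [hspec]
    rw [← Matrix.sub_mul, ← Matrix.mul_sub, diagonal_sub]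
    have h2 : (fun i => (((|d i| : ℝ) : ℂ) - ((d i : ℝ) : ℂ)))
        = fun i => ((|d i| - d i : ℝ) : ℂ) := by
      funext i; push_cast; ring
    rw [h2]
  have hadd : P + A = U * diagonal (fun i => ((|d i| + d i : ℝ) : ℂ)) * star U := by
    rw [hP]
    conv_lhs => rw [hspec]
    rw [← Matrix.add_mul, ← Matrix.mul_add, diagonal_add]
    have h2 : (fun i => (((|d i| : ℝ) : ℂ) + ((d i : ℝ) : ℂ)))
        = fun i => ((|d i| + d i : ℝ) : ℂ) := by
      funext i; push_cast; ring
    rw [h2]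
  have hPsqrt : P = (Matrix.posSemidef_conjTranspose_mul_self A).sqrt := by
    refine (sqrt_unique_psd _ hPpsd (?_ : P * P = _)).symm
    rw [← pow_two]
    rw [pow_two, hP, conj_diag_mul U hU, hherm]
    conv_rhs => rw [hspec]
    rw [conj_diag_mul U hU]
    have h2 : ((fun i => ((|d i| : ℝ) : ℂ)) * fun i => ((|d i| : ℝ) : ℂ))
        = ((fun i => ((d i : ℝ) : ℂ)) * fun i => ((d i : ℝ) : ℂ)) := by
      funext i
      simp only [Pi.mul_apply, ← Complex.ofReal_mul, abs_mul_abs_self]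
    rw [h2]
  have h1 : P.trace = ∑ i, ((|d i| : ℝ) : ℂ) := by
    rw [hP, trace_conj U hU, Matrix.trace_diagonal]
  have htrace : P.trace = (traceNorm A : ℂ) := by
    rw [h1]; unfold traceNorm
    rw [← hPsqrt, h1, ← Complex.ofReal_sum, Complex.ofReal_re]
  have hsum : traceNorm A = ∑ i, |d i| := by
    have h3 := htrace.symm.trans h1
    rw [← Complex.ofReal_sum] at h3
    exact_mod_cast h3
  exact ⟨⟨P, hPpsd,
    hsub ▸ psd_conj_diag U _ (fun i => by linarith [le_abs_self (d i)]),
    hadd ▸ psd_conj_diag U _ (fun i => by linarith [neg_abs_le (d i)]), htrace⟩, hsum⟩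

lemma spectral' {A : Mat ι} (hA : A.IsHermitian) :
    A = (hA.eigenvectorUnitary : Mat ι) * diagonal (fun i => ((hA.eigenvalues i : ℝ) : ℂ))
      * star (hA.eigenvectorUnitary : Mat ι) := by
  exact hA.spectral_theorem

lemma abs_parts {A : Mat ι} (hA : A.IsHermitian) :
    ∃ P : Mat ι, P.PosSemidef ∧ (P - A).PosSemidef ∧ (P + A).PosSemidef ∧
    P.trace = (traceNorm A : ℂ) :=
  (abs_parts_gen (hA.eigenvectorUnitary : Mat ι) hA.eigenvalues
    (Matrix.mem_unitaryGroup_iff'.mp hA.eigenvectorUnitary.2) (spectral' hA) hA.eq).1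

lemma traceNorm_eq_sum {A : Mat ι} (hA : A.IsHermitian) :
    traceNorm A = ∑ i, |hA.eigenvalues i| :=
  (abs_parts_gen (hA.eigenvectorUnitary : Mat ι) hA.eigenvalues
    (Matrix.mem_unitaryGroup_iff'.mp hA.eigenvectorUnitary.2) (spectral' hA) hA.eq).2

lemma traceNorm_le {A : Mat ι} (hA : A.IsHermitian) {B : Mat ι}
    (h1 : (B - A).PosSemidef) (h2 : (B + A).PosSemidef) :
    traceNorm A ≤ B.trace.re := by
  set U : Mat ι := (hA.eigenvectorUnitary : Mat ι)
  have hU : star U * U = 1 := Matrix.mem_unitaryGroup_iff'.mp hA.eigenvectorUnitary.2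
  have hU' : U * star U = 1 := Matrix.mem_unitaryGroup_iff.mp hA.eigenvectorUnitary.2
  set d : ι → ℝ := hA.eigenvalues
  set C : Mat ι := star U * B * U with hC
  have hAconj : star U * A * U = diagonal (fun i => ((d i : ℝ) : ℂ)) := by
    conv_lhs => rw [spectral' hA]
    show star U * (U * _ * star U) * U = _
    rw [show star U * (U * diagonal (fun i => ((d i : ℝ) : ℂ)) * star U) * U
        = (star U * U) * diagonal (fun i => ((d i : ℝ) : ℂ)) * (star U * U) by
          simp only [Matrix.mul_assoc], hU, one_mul, mul_one]
  have key : ∀ j, |d j| ≤ (C j j).re := by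
    intro j
    have hm : (C - diagonal (fun i => ((d i : ℝ) : ℂ))).PosSemidef := by
      rw [hC, ← hAconj, ← Matrix.sub_mul, ← Matrix.mul_sub]
      have := h1.conjTranspose_mul_mul_same U
      simpa [Matrix.star_eq_conjTranspose] using this
    have hp : (C + diagonal (fun i => ((d i : ℝ) : ℂ))).PosSemidef := by
      rw [hC, ← hAconj, ← Matrix.add_mul, ← Matrix.mul_add]
      have := h2.conjTranspose_mul_mul_same U
      simpa [Matrix.star_eq_conjTranspose] using this
    have e1 := psd_diag_nonneg hm j
    have e2 := psd_diag_nonneg hp j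
    simp only [Matrix.sub_apply, Matrix.add_apply, diagonal_apply_eq] at e1 e2
    have r1 := (Complex.le_def.mp e1).1
    have r2 := (Complex.le_def.mp e2).1
    simp only [Complex.zero_re, Complex.sub_re, Complex.add_re, Complex.ofReal_re] at r1 r2
    rw [abs_le]; constructor <;> linarith
  have htr : C.trace = B.trace := by
    rw [hC, Matrix.trace_mul_cycle, hU', one_mul]
  calc traceNorm A = ∑ j, |d j| := traceNorm_eq_sum hA
    _ ≤ ∑ j, (C j j).re := Finset.sum_le_sum fun j _ => key j
    _ = C.trace.re := by rw [Matrix.trace, Complex.re_sum]; rfl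
    _ = B.trace.re := by rw [htr]

lemma kron_conjT {τ : Type} [Fintype τ] (A : Matrix ι ι ℂ) (B : Matrix τ τ ℂ) :
    Aᴴ ⊗ₖ Bᴴ = (A ⊗ₖ B)ᴴ := by
  ext ⟨i,a⟩ ⟨j,b⟩; simp [Matrix.conjTranspose_apply, kroneckerMap_apply]

lemma kron_psd {τ : Type} [Fintype τ] {A : Matrix ι ι ℂ} {B : Matrix τ τ ℂ}
    (hA : A.PosSemidef) (hB : B.PosSemidef) : (A ⊗ₖ B).PosSemidef := by
  exact hA.kronecker hB

lemma cqMap_apply {n : ℕ} (A : Fin n → Mat ι) (X : Mat (Fin n)) :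
    cqMap A X = ∑ i, X i i • A i := rfl

lemma tensorId_cqMap {n : ℕ} (B : Fin n → Mat ι) {τ : Type} [Fintype τ] [DecidableEq τ]
    (X : Matrix (Fin n × τ) (Fin n × τ) ℂ) :
    tensorId (cqMap B) τ X = ∑ i, (B i) ⊗ₖ (X.submatrix (Prod.mk i) (Prod.mk i)) := by
  ext p q
  show cqMap B (Matrix.of fun i j => X (i, p.2) (j, q.2)) p.1 q.1 = _
  rw [cqMap_apply]
  simp only [Finset.sum_apply, Matrix.sum_apply, Matrix.smul_apply, kroneckerMap_apply,
    Matrix.of_apply, smul_eq_mul, Matrix.submatrix_apply]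
  exact Finset.sum_congr rfl fun i _ => mul_comm _ _

lemma psd_sum {γ τ : Type} [Fintype τ] {s : Finset γ} {f : γ → Matrix τ τ ℂ}
    (h : ∀ i ∈ s, (f i).PosSemidef) : (∑ i ∈ s, f i).PosSemidef := by
  classical
  induction s using Finset.induction with
  | empty => simpa using Matrix.PosSemidef.zero
  | insert a s hx ih =>
    rw [Finset.sum_insert hx]
    exact (h _ (Finset.mem_insert_self _ _)).add (ih fun i hi => h i (Finset.mem_insert_of_mem hi))

lemma isCP_cqMap {n : ℕ} {B : Fin n → Mat ι} (hB : ∀ i, (B i).PosSemidef) :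
    IsCP (cqMap B) := by
  intro l X hX
  rw [tensorId_cqMap]
  exact psd_sum fun i _ => kron_psd (hB i) (hX.submatrix _)

lemma tensorId_fin1 {φ : MatMap ι κ} (Z : Mat ι) (p q : κ × Fin 1) :
    tensorId φ (Fin 1) (Matrix.of fun p q => Z p.1 q.1) p q = φ Z p.1 q.1 := rfl

lemma isCP_apply_psd {φ : MatMap ι κ} (h : IsCP φ) {Z : Mat ι} (hZ : Z.PosSemidef) :
    (φ Z).PosSemidef := by
  have hX : (Matrix.of fun (p q : ι × Fin 1) => Z p.1 q.1).PosSemidef := hZ.submatrix Prod.fst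
  have hR := h 1 (Matrix.of fun p q => Z p.1 q.1) hX
  rw [posSemidef_iff_dotProduct_mulVec]
  constructor
  · ext i j
    have h2 := congrFun (congrFun hR.1 (i, 0)) (j, 0)
    simpa [tensorId_fin1, Matrix.conjTranspose_apply] using h2
  · intro y
    have h3 := hR.dotProduct_mulVec_nonneg (fun p => y p.1)
    simpa [dotProduct, mulVec, tensorId_fin1, Fintype.sum_prod_type, Finset.mul_sum] using h3


lemma stdBasis_eq_diagonal (i : ι) :
    Matrix.single i i (1:ℂ) = diagonal (Pi.single i 1) := by
  ext a b
  simp only [Matrix.single, Matrix.of_apply, Matrix.diagonal_apply, Pi.single_apply]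
  by_cases h1 : i = a <;> by_cases h2 : i = b <;> simp [h1, h2] <;> aesop

lemma psd_stdBasis (i : ι) : (Matrix.single i i (1:ℂ)).PosSemidef := by
  rw [stdBasis_eq_diagonal]
  exact .diagonal fun j => by
    by_cases h : j = i <;> simp [Pi.single_apply, h]

lemma trace_stdBasis (i : ι) : (Matrix.single i i (1:ℂ)).trace = 1 := by
  rw [stdBasis_eq_diagonal, Matrix.trace_diagonal]
  simp

lemma cqMap_stdBasis {n : ℕ} (A : Fin n → Mat ι) (i : Fin n) :
    cqMap A (Matrix.single i i 1) = A i := by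
  rw [cqMap_apply]
  have : ∀ j : Fin n, (Matrix.single i i (1:ℂ)) j j = if i = j then 1 else 0 := by
    intro j; simp [Matrix.single, Matrix.of_apply]
  simp only [this, ite_smul, one_smul, zero_smul]
  simp

lemma cqMap_smul_sub {n : ℕ} (r : ℂ) (σ B : Fin n → Mat ι) :
    r • cqMap σ - cqMap B = cqMap (fun i => r • σ i - B i) := by
  apply LinearMap.ext; intro X
  simp only [LinearMap.sub_apply, LinearMap.smul_apply, cqMap_apply, smul_sub,
    Finset.smul_sum, Finset.sum_sub_distrib]
  congr 1
  exact Finset.sum_congr rfl fun i _ => smul_comm _ _ _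

lemma cqMap_smul_add {n : ℕ} (r : ℂ) (σ B : Fin n → Mat ι) :
    r • cqMap σ + cqMap B = cqMap (fun i => r • σ i + B i) := by
  apply LinearMap.ext; intro X
  simp only [LinearMap.add_apply, LinearMap.smul_apply, cqMap_apply, smul_add,
    Finset.smul_sum, Finset.sum_add_distrib]
  congr 1
  exact Finset.sum_congr rfl fun i _ => smul_comm _ _ _

lemma trace_cqMap {n : ℕ} (B : Fin n → Mat ι) (X : Mat (Fin n)) :
    (cqMap B X).trace = ∑ i, X i i * (B i).trace := by
  rw [cqMap_apply, Matrix.trace_sum]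
  exact Finset.sum_congr rfl fun i _ => by rw [Matrix.trace_smul]; rfl

end DNaux

theorem diamondNorm_cqMap {n k : ℕ} [NeZero n] (A : Fin n → Mat (Fin k))
    (hA : ∀ i, (A i).IsHermitian) :
    diamondNorm (cqMap A)
      = Finset.univ.sup' Finset.univ_nonempty (fun i => traceNorm (A i)) := by
  classical
  set M := Finset.univ.sup' Finset.univ_nonempty (fun i => traceNorm (A i)) with hMdef
  obtain ⟨i0⟩ := (inferInstance : Nonempty (Fin n))
  have hMub : ∀ i, traceNorm (A i) ≤ M := fun i => by
    rw [hMdef]; exact Finset.le_sup' (fun i => traceNorm (A i)) (Finset.mem_univ i)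
  have hM0 : 0 ≤ M := le_trans (DNaux.traceNorm_nonneg (A i0)) (hMub i0)
  rcases Nat.eq_zero_or_pos k with hk | hk
  · subst hk
    have hTN : ∀ i, traceNorm (A i) = 0 := fun i => by
      simp [traceNorm, Matrix.trace]
    have hMz : M = 0 := by
      rw [hMdef, show (fun i => traceNorm (A i)) = fun _ => (0:ℝ) from funext hTN,
        Finset.sup'_const]
    rw [hMz]
    unfold diamondNorm
    rw [show {r : ℝ | 0 < r ∧ ∃ α : MatMap (Fin n) (Fin 0), IsChannel α ∧
        IsCP ((r : ℂ) • α - cqMap A) ∧ IsCP ((r : ℂ) • α + cqMap A)} = ∅ from ?_,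
      Real.sInf_empty]
    ext r
    simp only [Set.mem_setOf_eq, Set.mem_empty_iff_false, iff_false, not_and]
    rintro hr ⟨α, ⟨hCP, hTP⟩, hrest⟩
    have h0 : (α 1).trace = 0 := by simp [Matrix.trace]
    have h1 := hTP 1
    rw [h0, Matrix.trace_one] at h1
    exact (Nat.cast_ne_zero (R := ℂ)).mpr (NeZero.ne n)
      (by simpa [Fintype.card_fin] using h1.symm)
  · haveI : Nonempty (Fin k) := ⟨⟨0, hk⟩⟩
    have hkR : (k : ℝ) ≠ 0 := Nat.cast_ne_zero.mpr hk.ne'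
    choose P hP1 hP2 hP3 hP4 using fun i => DNaux.abs_parts (hA i)
    have hmem : ∀ r : ℝ, 0 < r → M ≤ r →
        r ∈ {r : ℝ | 0 < r ∧ ∃ α : MatMap (Fin n) (Fin k), IsChannel α ∧
          IsCP ((r : ℂ) • α - cqMap A) ∧ IsCP ((r : ℂ) • α + cqMap A)} := by
      intro r hr hMr
      refine ⟨hr, ?_⟩
      set c : Fin n → ℝ := fun i => (r - traceNorm (A i)) / k with hc
      have hc0 : ∀ i, 0 ≤ c i := fun i =>
        div_nonneg (by linarith [hMub i]) (Nat.cast_nonneg k)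
      set Q : Fin n → Mat (Fin k) := fun i => P i + ((c i : ℝ) : ℂ) • 1 with hQ
      have hQpsd : ∀ i, (Q i).PosSemidef := fun i =>
        (hP1 i).add (DNaux.smul_psd .one (hc0 i))
      have hQtr : ∀ i, (Q i).trace = (r : ℂ) := by
        intro i
        have hreal : traceNorm (A i) + c i * k = r := by
          simp only [hc]
          rw [div_mul_cancel₀ _ hkR]; ring
        simp only [hQ]
        rw [Matrix.trace_add, Matrix.trace_smul, Matrix.trace_one, hP4 i,
          Fintype.card_fin, smul_eq_mul]
        exact_mod_cast hreal
      set σ : Fin n → Mat (Fin k) := fun i => ((r⁻¹ : ℝ) : ℂ) • Q i with hσ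
      have hrσ : ∀ i, (r : ℂ) • σ i = Q i := by
        intro i
        simp only [hσ, smul_smul]
        rw [show ((r : ℂ) * ((r⁻¹ : ℝ) : ℂ)) = 1 by
          push_cast; exact mul_inv_cancel₀ (by exact_mod_cast hr.ne')]
        exact one_smul _ _
      have hσpsd : ∀ i, (σ i).PosSemidef := fun i =>
        DNaux.smul_psd (hQpsd i) (inv_nonneg.mpr hr.le)
      refine ⟨cqMap σ, ⟨DNaux.isCP_cqMap hσpsd, ?_⟩, ?_, ?_⟩
      · intro X
        rw [DNaux.trace_cqMap]
        have hσtr : ∀ i, (σ i).trace = 1 := by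
          intro i
          simp only [hσ]
          rw [Matrix.trace_smul, hQtr i, smul_eq_mul]
          push_cast
          exact inv_mul_cancel₀ (by exact_mod_cast hr.ne')
        simp only [hσtr, mul_one]
        simp [Matrix.trace, Matrix.diag]
      · rw [DNaux.cqMap_smul_sub]
        apply DNaux.isCP_cqMap
        intro i
        rw [hrσ i]
        simp only [hQ]
        rw [add_sub_right_comm]
        exact (hP2 i).add (DNaux.smul_psd .one (hc0 i))
      · rw [DNaux.cqMap_smul_add]
        apply DNaux.isCP_cqMap
        intro i
        rw [hrσ i]
        simp only [hQ]
        rw [add_right_comm]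
        exact (hP3 i).add (DNaux.smul_psd .one (hc0 i))
    unfold diamondNorm
    apply le_antisymm
    · apply le_of_forall_pos_le_add
      intro e he
      exact csInf_le ⟨0, fun x hx => hx.1.le⟩ (hmem (M + e) (by linarith) (by linarith))
    · apply le_csInf ⟨M + 1, hmem (M + 1) (by linarith) (by linarith)⟩
      rintro r ⟨hr, α, ⟨hCP, hTP⟩, hm, hp⟩
      apply Finset.sup'_le
      intro i _
      have hEpsd := DNaux.psd_stdBasis (ι := Fin n) i
      have h1 : ((r : ℂ) • α (Matrix.single i i 1) - A i).PosSemidef := by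
        have := DNaux.isCP_apply_psd hm hEpsd
        simpa [LinearMap.sub_apply, LinearMap.smul_apply, DNaux.cqMap_stdBasis] using this
      have h2 : ((r : ℂ) • α (Matrix.single i i 1) + A i).PosSemidef := by
        have := DNaux.isCP_apply_psd hp hEpsd
        simpa [LinearMap.add_apply, LinearMap.smul_apply, DNaux.cqMap_stdBasis] using this
      have htr : ((r : ℂ) • α (Matrix.single i i 1)).trace = (r : ℂ) := by
        rw [Matrix.trace_smul, hTP _, DNaux.trace_stdBasis, smul_eq_mul, mul_one]
      have hle := DNaux.traceNorm_le (hA i) h1 h2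
      rw [htr] at hle
      simpa using hle
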